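/- Let x_1, …, x_n be pairwise distinct positive real numbers, consider the intervals I_j = [0, x_j) for j = 1, …, n, and let the cost function be f(x) = 2^x. Then an ordering α minimizes the cost if and only if x_{α(1)} < x_{α(2)} < … < x_{α(n)}; in particular, the ordering that sorts the intervals by increasing right endpoint is the unique optimal ordering. -/

import Mathlib

open MeasureTheory

/-- The cost of an ordering `α` of the sets `S 1, …, S n`: sum over positions `k` of
`f` applied to the Lebesgue measure of the exposed part of the `k`-th set. -/
noncomputable def exposedCost {n : ℕ} (S : Fin n → Set ℝ) (f : ℝ → ℝ)
    (α : Equiv.Perm (Fin n)) : ℝ :=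
  ∑ k : Fin n, f ((volume (S (α k) \ ⋃ (j : Fin n) (_ : j < k), S (α j))).toReal)

/-- For pairwise distinct positive reals `x_j`, the intervals `I_j = [0, x_j)` and the
cost function `f t = 2 ^ t`, an ordering is optimal if and only if it sorts the intervals
by increasing right endpoint; in particular that sorting ordering is the unique optimal
ordering. -/
noncomputable def lcost : ℝ → List ℝ → ℝ
  | _, [] => 0
  | m, a :: t => (2:ℝ) ^ (max (a - m) 0) + lcost (max m a) t

lemma key_ineq {a c : ℝ} (ha : 0 < a) (hc : 0 < c) :
    (2:ℝ) ^ a + (2:ℝ) ^ c < (2:ℝ) ^ (a + c) + 1 := by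
  have h2 : (0:ℝ) < 2 := by norm_num
  have h1 : (1:ℝ) < (2:ℝ) ^ a := by
    rw [show (1:ℝ) = (2:ℝ) ^ (0:ℝ) by simp]
    exact Real.rpow_lt_rpow_left_iff (by norm_num) |>.mpr ha
  have h3 : (1:ℝ) < (2:ℝ) ^ c := by
    rw [show (1:ℝ) = (2:ℝ) ^ (0:ℝ) by simp]
    exact Real.rpow_lt_rpow_left_iff (by norm_num) |>.mpr hc
  rw [Real.rpow_add h2]
  nlinarith

lemma lcost_append (t : List ℝ) (m a : ℝ) :
    lcost m (t ++ [a]) = lcost m t + (2:ℝ) ^ (max (a - t.foldl max m) 0) := by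
  induction t generalizing m with
  | nil => simp [lcost]
  | cons b t ih => simp [lcost, ih (max m b)]; ring

lemma le_foldl_max (t : List ℝ) (m : ℝ) : m ≤ t.foldl max m := by
  induction t generalizing m with
  | nil => simp
  | cons b t ih => exact le_trans (le_max_left m b) (ih _)

lemma mem_le_foldl_max {t : List ℝ} {b : ℝ} (hb : b ∈ t) (m : ℝ) : b ≤ t.foldl max m := by
  induction t generalizing m with
  | nil => simp at hb
  | cons c t ih =>
    rcases List.mem_cons.mp hb with h | h
    · subst h; exact le_trans (le_max_right m b) (le_foldl_max _ _)
    · exact ih h _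

lemma foldl_max_perm {t s : List ℝ} (h : t.Perm s) : ∀ m, t.foldl max m = s.foldl max m := by
  induction h with
  | nil => intro m; rfl
  | cons a p ih => intro m; simpa using ih (max m a)
  | swap a b l => intro m; simp only [List.foldl_cons]; rw [sup_right_comm]
  | trans p q ih1 ih2 => intro m; rw [ih1, ih2]


lemma D' : ∀ (u : List ℝ) (m v : ℝ) (w : List ℝ), w ≠ [] →
    (∀ b ∈ u ++ v :: w, m < b) → (u ++ v :: w).Pairwise (· < ·) →
    lcost m (u ++ v :: w) < lcost m (u ++ w) + 1
  | [], m, v, w, hw, hgt, hp => by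
    obtain ⟨b, w', rfl⟩ := List.exists_cons_of_ne_nil hw
    have hmv : m < v := hgt v (by simp)
    have hvb : v < b := (List.pairwise_cons.mp hp).1 b (by simp)
    have hmb : m < b := hmv.trans hvb
    simp only [List.nil_append, lcost]
    rw [max_eq_right hmv.le, max_eq_right hmb.le, max_eq_right hvb.le,
      max_eq_left (by linarith : (0:ℝ) ≤ v - m), max_eq_left (by linarith : (0:ℝ) ≤ b - v),
      max_eq_left (by linarith : (0:ℝ) ≤ b - m)]
    have := key_ineq (by linarith : (0:ℝ) < v - m) (by linarith : (0:ℝ) < b - v)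
    rw [show v - m + (b - v) = b - m by ring] at this
    linarith
  | a :: u, m, v, w, hw, hgt, hp => by
    have hma : m < a := hgt a (by simp)
    have hrec := D' u a v w hw (fun b hb => (List.pairwise_cons.mp hp).1 b (by simpa using hb))
      (List.pairwise_cons.mp hp).2
    simp only [List.cons_append, lcost, max_eq_right hma.le, List.append_eq]
    linarith


lemma mainM : ∀ (l s : List ℝ), (∀ b ∈ s, 0 < b) → s.Pairwise (· < ·) → s.Perm l →
    lcost 0 s ≤ lcost 0 l ∧ (l ≠ s → lcost 0 s < lcost 0 l) := by
  intro l
  induction l using List.reverseRecOn with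
  | nil =>
    intro s _ _ hperm
    have := List.Perm.eq_nil hperm
    subst this
    exact ⟨le_refl _, fun h => absurd rfl h⟩
  | append_singleton t a ih =>
    intro s hposs hpair hperm
    rcases List.eq_nil_or_concat s with rfl | ⟨s', g, rfl⟩
    · exact absurd hperm.symm.eq_nil (by simp)
    rw [List.concat_eq_append] at *
    have hpp := List.pairwise_append.mp hpair
    have hlt : ∀ b ∈ s', b < g := fun b hb => hpp.2.2 b hb g (by simp)
    by_cases hag : a = g
    · -- a is the maximum, last element of s
      subst hag
      have hpermt : s'.Perm t :=
        ((List.perm_append_singleton a s').symm.trans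
          (hperm.trans (List.perm_append_singleton a t))).cons_inv
      have hsub : s'.Sublist (s' ++ [a]) := by simp
      have ihres := ih s' (fun b hb => hposs b (hsub.mem hb)) hpp.1 hpermt
      have hfold : s'.foldl max 0 = t.foldl max 0 := foldl_max_perm hpermt 0
      rw [lcost_append, lcost_append, hfold]
      refine ⟨by linarith [ihres.1], fun hne => ?_⟩
      have htd : t ≠ s' := fun h => hne (by rw [h])
      linarith [ihres.2 htd]
    · -- a is not the maximum
      have has' : a ∈ s' := by
        have : a ∈ s' ++ [g] := hperm.symm.subset (by simp)
        rcases List.mem_append.mp this with h | h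
        · exact h
        · exact absurd (List.mem_singleton.mp h) hag
      obtain ⟨u, w', hsw⟩ := List.append_of_mem has'
      subst hsw
      have hseq : (u ++ a :: w') ++ [g] = u ++ a :: (w' ++ [g]) := by simp
      have hag' : a < g := hlt a has'
      have hgmem : g ∈ (u ++ a :: w') ++ [g] := by simp
      have hgt : g ∈ t := by
        rcases List.mem_append.mp (hperm.subset hgmem) with h | h
        · exact h
        · exact absurd (List.mem_singleton.mp h).symm hag
      have hfoldg : g ≤ t.foldl max 0 := mem_le_foldl_max hgt 0
      have hll : lcost 0 (t ++ [a]) = lcost 0 t + 1 := by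
        rw [lcost_append, max_eq_right (by linarith), Real.rpow_zero]
      have hpermt : (u ++ (w' ++ [g])).Perm t := by
        have p1 : ((u ++ a :: w') ++ [g]).Perm (a :: (u ++ (w' ++ [g]))) := by
          rw [hseq]; exact List.perm_middle
        have p2 : ((u ++ a :: w') ++ [g]).Perm (a :: t) :=
          hperm.trans (List.perm_append_singleton a t)
        exact (p1.symm.trans p2).cons_inv
      have hsubuw : (u ++ (w' ++ [g])).Sublist ((u ++ a :: w') ++ [g]) := by
        rw [hseq]
        exact (List.sublist_cons_self a (w' ++ [g])).append_left u
      have ihres := ih (u ++ (w' ++ [g])) (fun b hb => hposs b (hsubuw.mem hb))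
        (hpair.sublist hsubuw) hpermt
      have hD : lcost 0 ((u ++ a :: w') ++ [g]) < lcost 0 (u ++ (w' ++ [g])) + 1 := by
        rw [hseq]
        exact D' u 0 a (w' ++ [g]) (by simp) (fun b hb => hposs b (hseq ▸ hb)) (hseq ▸ hpair)
      have hstrict : lcost 0 ((u ++ a :: w') ++ [g]) < lcost 0 (t ++ [a]) := by
        rw [hll]; linarith [ihres.1]
      exact ⟨hstrict.le, fun _ => hstrict⟩

lemma Ico_zero_union (a b : ℝ) : Set.Ico (0:ℝ) a ∪ Set.Ico 0 b = Set.Ico 0 (max a b) := by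
  ext t
  simp only [Set.mem_union, Set.mem_Ico, lt_max_iff]
  tauto

lemma Ico_zero_diff {c : ℝ} (hc : 0 ≤ c) (a : ℝ) :
    Set.Ico (0:ℝ) a \ Set.Ico 0 c = Set.Ico c a := by
  ext t
  simp only [Set.mem_diff, Set.mem_Ico, not_and, not_lt]
  constructor
  · rintro ⟨⟨h0, ha⟩, h2⟩
    exact ⟨h2 h0, ha⟩
  · rintro ⟨h1, h2⟩
    exact ⟨⟨hc.trans h1, h2⟩, fun _ => h1⟩

lemma exposed_eq : ∀ (n : ℕ) (y : Fin n → ℝ) (m : ℝ), 0 ≤ m → (∀ i, 0 < y i) →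
    (∑ k : Fin n, (2:ℝ) ^ ((volume (Set.Ico 0 (y k) \
      (Set.Ico 0 m ∪ ⋃ (j : Fin n) (_ : j < k), Set.Ico 0 (y j)))).toReal))
    = lcost m (List.ofFn y)
  | 0, y, m, hm, hy => by simp [lcost]
  | (n+1), y, m, hm, hy => by
    rw [Fin.sum_univ_succ]
    have h0 : (⋃ (j : Fin (n+1)) (_ : j < (0 : Fin (n+1))), Set.Ico (0:ℝ) (y j)) = ∅ := by
      simp [Fin.not_lt_zero]
    have hterm0 : (volume (Set.Ico 0 (y 0) \
        (Set.Ico 0 m ∪ ⋃ (j : Fin (n+1)) (_ : j < (0 : Fin (n+1))), Set.Ico (0:ℝ) (y j)))).toReal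
        = max (y 0 - m) 0 := by
      rw [h0, Set.union_empty, Ico_zero_diff hm, Real.volume_Ico, ENNReal.toReal_ofReal']
    have hU : ∀ k : Fin n, (Set.Ico (0:ℝ) m ∪
        ⋃ (j : Fin (n+1)) (_ : j < Fin.succ k), Set.Ico (0:ℝ) (y j)) =
        (Set.Ico (0:ℝ) (max m (y 0)) ∪
          ⋃ (j : Fin n) (_ : j < k), Set.Ico (0:ℝ) ((y ∘ Fin.succ) j)) := by
      intro k
      have hdec : (⋃ (j : Fin (n+1)) (_ : j < Fin.succ k), Set.Ico (0:ℝ) (y j)) =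
          Set.Ico (0:ℝ) (y 0) ∪ ⋃ (j : Fin n) (_ : j < k), Set.Ico (0:ℝ) (y j.succ) := by
        ext t
        simp only [Set.mem_iUnion, Set.mem_union, Fin.exists_fin_succ, Fin.succ_pos,
          Fin.succ_lt_succ_iff, exists_prop]
        tauto
      rw [hdec, ← Set.union_assoc, Ico_zero_union]
      rfl
    have hrest : ∑ k : Fin n, (2:ℝ) ^ ((volume (Set.Ico 0 (y (Fin.succ k)) \
        (Set.Ico 0 m ∪ ⋃ (j : Fin (n+1)) (_ : j < Fin.succ k), Set.Ico (0:ℝ) (y j)))).toReal)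
        = lcost (max m (y 0)) (List.ofFn (y ∘ Fin.succ)) := by
      rw [← exposed_eq n (y ∘ Fin.succ) (max m (y 0))
        (le_trans hm (le_max_left _ _)) (fun i => hy _)]
      refine Finset.sum_congr rfl fun k _ => ?_
      rw [hU k]
      rfl
    rw [hterm0, hrest, List.ofFn_succ, lcost]
    rfl

lemma bridge {n : ℕ} (x : Fin n → ℝ) (hpos : ∀ i, 0 < x i) (α : Equiv.Perm (Fin n)) :
    exposedCost (fun j => Set.Ico (0:ℝ) (x j)) (fun t => (2:ℝ) ^ t) α
      = lcost 0 (List.ofFn (x ∘ α)) := by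
  have h := exposed_eq n (x ∘ α) 0 le_rfl (fun i => hpos _)
  rw [← h]
  unfold exposedCost
  refine Finset.sum_congr rfl fun k _ => ?_
  congr 2
  rw [Set.Ico_self, Set.empty_union]
  rfl

theorem stmt_17 (n : ℕ) (x : Fin n → ℝ) (hpos : ∀ i, 0 < x i)
    (hdist : ∀ i j : Fin n, i ≠ j → x i ≠ x j) :
    (∀ α : Equiv.Perm (Fin n),
      (∀ β : Equiv.Perm (Fin n),
        exposedCost (fun j => Set.Ico (0 : ℝ) (x j)) (fun t => (2 : ℝ) ^ t) α ≤
        exposedCost (fun j => Set.Ico (0 : ℝ) (x j)) (fun t => (2 : ℝ) ^ t) β) ↔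
      (∀ k l : Fin n, k < l → x (α k) < x (α l))) ∧
    ∃! α : Equiv.Perm (Fin n),
      ∀ β : Equiv.Perm (Fin n),
        exposedCost (fun j => Set.Ico (0 : ℝ) (x j)) (fun t => (2 : ℝ) ^ t) α ≤
        exposedCost (fun j => Set.Ico (0 : ℝ) (x j)) (fun t => (2 : ℝ) ^ t) β := by
  have hinj : Function.Injective x := fun i j h => by
    by_contra hne
    exact hdist i j hne h
  set C := fun α : Equiv.Perm (Fin n) =>
    exposedCost (fun j => Set.Ico (0 : ℝ) (x j)) (fun t => (2 : ℝ) ^ t) α with hC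
  have hbridge : ∀ α, C α = lcost 0 (List.ofFn (x ∘ α)) := fun α => bridge x hpos α
  have hcond : ∀ α : Equiv.Perm (Fin n),
      (∀ k l : Fin n, k < l → x (α k) < x (α l)) ↔ (List.ofFn (x ∘ α)).Pairwise (· < ·) := by
    intro α
    rw [List.pairwise_ofFn]
    rfl
  have hpos' : ∀ (α : Equiv.Perm (Fin n)) (b : ℝ), b ∈ List.ofFn (x ∘ α) → 0 < b := by
    intro α b hb
    obtain ⟨i, rfl⟩ := List.mem_ofFn.mp hb
    exact hpos _
  have hperm2 : ∀ α β : Equiv.Perm (Fin n),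
      (List.ofFn (x ∘ α)).Perm (List.ofFn (x ∘ β)) := fun α β =>
    (α.ofFn_comp_perm x).trans (β.ofFn_comp_perm x).symm
  -- the sorting permutation
  set σ : Equiv.Perm (Fin n) := Tuple.sort x with hσ
  have hσmono : StrictMono (x ∘ σ) :=
    (Tuple.monotone_sort x).strictMono_of_injective (hinj.comp σ.injective)
  have hσcond : ∀ k l : Fin n, k < l → x (σ k) < x (σ l) := fun k l h => hσmono h
  have opt_of_sorted : ∀ α : Equiv.Perm (Fin n),
      (∀ k l : Fin n, k < l → x (α k) < x (α l)) → ∀ β, C α ≤ C β := by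
    intro α hα β
    rw [hbridge, hbridge]
    exact (mainM (List.ofFn (x ∘ β)) (List.ofFn (x ∘ α)) (hpos' α)
      ((hcond α).mp hα) (hperm2 α β)).1
  have strict_of_not : ∀ α : Equiv.Perm (Fin n),
      ¬(∀ k l : Fin n, k < l → x (α k) < x (α l)) → C σ < C α := by
    intro α hα
    rw [hbridge, hbridge]
    refine (mainM (List.ofFn (x ∘ α)) (List.ofFn (x ∘ σ)) (hpos' σ)
      ((hcond σ).mp hσcond) (hperm2 σ α)).2 ?_
    intro h
    apply hα
    rw [hcond α, show x ∘ ⇑α = x ∘ ⇑σ from List.ofFn_injective h]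
    exact (hcond σ).mp hσcond
  have part1 : ∀ α : Equiv.Perm (Fin n),
      (∀ β, C α ≤ C β) ↔ (∀ k l : Fin n, k < l → x (α k) < x (α l)) := by
    intro α
    constructor
    · intro hopt
      by_contra hns
      exact absurd (hopt σ) (not_le.mpr (strict_of_not α hns))
    · exact fun hs β => opt_of_sorted α hs β
  refine ⟨part1, σ, opt_of_sorted σ hσcond, ?_⟩
  intro β hβ
  have hβcond := (part1 β).mp hβ
  haveI : IsAntisymm ℝ (· < ·) := ⟨fun a b h1 h2 => absurd h2 (asymm h1)⟩
  have heq : List.ofFn (x ∘ β) = List.ofFn (x ∘ σ) :=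
    List.Perm.eq_of_pairwise (fun a b _ _ h1 h2 => absurd h2 (asymm h1)) ((hcond β).mp hβcond) ((hcond σ).mp hσcond) (hperm2 β σ)
  have hfun : x ∘ ⇑β = x ∘ ⇑σ := List.ofFn_injective heq
  exact Equiv.ext fun i => hinj (congrFun hfun i)
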